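/- In the recursive factorization of a cyclically reduced non-power word w into subwords a_n, b_n, at every stage n the following letter conditions hold: the last letter of a_n is not the inverse of the first letter of b_n; the last letter of b_n is not the inverse of the first letter of a_n; the last letter of a_n is not the inverse of the first letter of a_n; and the last letters of a_n and b_n are distinct. -/

import Mathlib

/-- A letter `g_i^{±1}` of the alphabet `Σ_k`. -/
abbrev Letter (k : ℕ) := Fin k × Bool

/-- The inverse letter: `(g_i^{α})⁻¹ = g_i^{-α}`. -/
def Letter.inv {k : ℕ} (x : Letter k) : Letter k := (x.1, !x.2)

/-- `w` is cyclically reduced: no two cyclically consecutive letters are mutually inverse. -/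
def CyclicallyReduced {k : ℕ} (w : List (Letter k)) : Prop :=
  ∀ i : Fin w.length,
    w.get ⟨((i : ℕ) + 1) % w.length, Nat.mod_lt _ i.pos⟩ ≠ Letter.inv (w.get i)

/-- The element of the free group `F_k` represented by a word over `Σ_k`. -/
def toFree {k : ℕ} (w : List (Letter k)) : FreeGroup (Fin k) :=
  (w.map fun x => if x.2 then FreeGroup.of x.1 else (FreeGroup.of x.1)⁻¹).prod

/-- A cyclically reduced word is chain-reduced. -/
lemma cyc_chain {k : ℕ} {w : List (Letter k)} (hcyc : CyclicallyReduced w) :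
    w.Chain' (fun x y => y ≠ Letter.inv x) := by
  show List.IsChain _ w
  rw [List.isChain_iff_getElem]
  intro i hi
  have h1 : i < w.length := by omega
  have := hcyc ⟨i, h1⟩
  simpa [Nat.mod_eq_of_lt (show i + 1 < w.length by omega)] using this

/-- Wrap-around: the last letter's inverse is not the head. -/
lemma cyc_wrap {k : ℕ} {w : List (Letter k)} (hcyc : CyclicallyReduced w) (hw : w ≠ []) :
    ∀ x ∈ w.getLast?, ∀ y ∈ w.head?, Letter.inv x ≠ y := by
  intro x hx y hy
  have hlen : 0 < w.length := List.length_pos_iff.mpr hw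
  have := hcyc ⟨w.length - 1, by omega⟩
  have hmod : (w.length - 1 + 1) % w.length = 0 := by
    have : w.length - 1 + 1 = w.length := by omega
    simp [this]
  rw [show (⟨(w.length - 1 + 1) % w.length, _⟩ : Fin w.length) = ⟨0, hlen⟩ by
    exact Fin.ext hmod] at this
  have hx' : x = w.getLast hw := by
    obtain ⟨_, h⟩ := List.mem_getLast?_eq_getLast hx; exact h
  have hy' : y = w.get ⟨0, hlen⟩ := by
    cases w with
    | nil => exact absurd rfl hw
    | cons a l => simpa using hy.symm
  rw [hx', hy']
  have hgl : w.getLast hw = w.get ⟨w.length - 1, by omega⟩ := by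
    simp [List.getLast_eq_getElem, List.get_eq_getElem]
  rw [hgl]
  exact fun h => this h.symm


/-- In the recursive factorization of a cyclically reduced non-power word
`w = a₀ b₀` (with `t(a₀) ≠ t(b₀)` and `t(a₀)⁻¹ ≠ h(a₀)` at the start), at every
stage `n`: `t(aₙ)⁻¹ ≠ h(bₙ)`, `t(bₙ)⁻¹ ≠ h(aₙ)`, `t(aₙ)⁻¹ ≠ h(aₙ)`, and
`t(aₙ) ≠ t(bₙ)`, where `h` and `t` denote the first and last letters of a word. -/
theorem stmt5 {k : ℕ} (w : List (Letter k)) (hcyc : CyclicallyReduced w)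
    (hnp : ¬ ∃ (g : FreeGroup (Fin k)) (d : ℕ), 2 ≤ d ∧ toFree w = g ^ d)
    (N : ℕ) (a b : ℕ → List (Letter k))
    (ha0 : a 0 ≠ []) (hb0 : b 0 ≠ []) (hw0 : w = a 0 ++ b 0)
    (hlast : ∀ x ∈ (a 0).getLast?, ∀ y ∈ (b 0).getLast?, x ≠ y)
    (hha : ∀ x ∈ (a 0).getLast?, ∀ y ∈ (a 0).head?, Letter.inv x ≠ y)
    (hrec : ∀ n < N,
      (a n <+: b n ∧ a (n + 1) = a n ∧ b n = a n ++ b (n + 1)) ∨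
      (b n <+: a n ∧ a (n + 1) = b n ∧ a n = b n ++ b (n + 1))) :
    ∀ n ≤ N,
      (∀ x ∈ (a n).getLast?, ∀ y ∈ (b n).head?, Letter.inv x ≠ y) ∧
      (∀ x ∈ (b n).getLast?, ∀ y ∈ (a n).head?, Letter.inv x ≠ y) ∧
      (∀ x ∈ (a n).getLast?, ∀ y ∈ (a n).head?, Letter.inv x ≠ y) ∧
      (∀ x ∈ (a n).getLast?, ∀ y ∈ (b n).getLast?, x ≠ y) := by
  have hchain : w.Chain' (fun x y => y ≠ Letter.inv x) := cyc_chain hcyc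
  -- strengthened invariant: nonemptiness, infix property, and the four conditions
  suffices H : ∀ n ≤ N, a n ≠ [] ∧ b n ≠ [] ∧ (a n ++ b n <:+: w) ∧
      (∀ x ∈ (a n).getLast?, ∀ y ∈ (b n).head?, Letter.inv x ≠ y) ∧
      (∀ x ∈ (b n).getLast?, ∀ y ∈ (a n).head?, Letter.inv x ≠ y) ∧
      (∀ x ∈ (a n).getLast?, ∀ y ∈ (a n).head?, Letter.inv x ≠ y) ∧
      (∀ x ∈ (a n).getLast?, ∀ y ∈ (b n).getLast?, x ≠ y) by
    intro n hn
    exact (H n hn).2.2.2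
  intro n
  induction n with
  | zero =>
    intro _
    refine ⟨ha0, hb0, by rw [hw0], ?_, ?_, hha, hlast⟩
    · -- t(a0)⁻¹ ≠ h(b0): interior reducedness
      have := (List.isChain_append.mp (hw0 ▸ hchain)).2.2
      intro x hx y hy h
      exact this x hx y hy (h ▸ rfl)
    · -- t(b0)⁻¹ ≠ h(a0): wrap-around
      intro x hx y hy
      have hx' : x ∈ w.getLast? := by
        rw [hw0, List.getLast?_append_of_ne_nil _ hb0]; exact hx
      have hy' : y ∈ w.head? := by
        rw [hw0, List.head?_append_of_ne_nil _ ha0]; exact hy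
      exact cyc_wrap hcyc (hw0 ▸ (by simp [ha0])) x hx' y hy'
  | succ n ih =>
    intro hn
    obtain ⟨han, hbn, hinf, h1, h2, h3, h4⟩ := ih (by omega)
    rcases hrec n (by omega) with ⟨hpre, ha', hb'⟩ | ⟨hpre, ha', hb'⟩
    · -- case 1 : a(n+1) = a n, b n = a n ++ b (n+1)
      have hbne : b (n + 1) ≠ [] := by
        intro h
        rw [h, List.append_nil] at hb'
        obtain ⟨x, hx⟩ := List.getLast?_isSome.mpr han |> Option.isSome_iff_exists.mp
        exact h4 x hx x (hb' ▸ hx) rfl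
      have hinf' : a (n + 1) ++ b (n + 1) <:+: w := by
        rw [ha', ← hb']
        exact ((b n).suffix_append (l₁ := a n) |>.isInfix).trans hinf
      have hch : ((a n) ++ b (n + 1)).Chain' (fun x y => y ≠ Letter.inv x) :=
        hchain.infix (ha' ▸ hinf')
      have hmid := (List.isChain_append.mp hch).2.2
      have hbl : (b (n + 1)).getLast? = (b n).getLast? := by
        rw [hb', List.getLast?_append_of_ne_nil _ hbne]
      refine ⟨ha' ▸ han, hbne, hinf', ?_, ?_, ?_, ?_⟩
      · rw [ha']; intro x hx y hy h; exact hmid x hx y hy (h ▸ rfl)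
      · rw [ha', hbl]; exact h2
      · rw [ha']; exact h3
      · rw [ha', hbl]; exact h4
    · -- case 2 : a(n+1) = b n, a n = b n ++ b (n+1)
      have hbne : b (n + 1) ≠ [] := by
        intro h
        rw [h, List.append_nil] at hb'
        obtain ⟨x, hx⟩ := List.getLast?_isSome.mpr hbn |> Option.isSome_iff_exists.mp
        exact h4 x (hb' ▸ hx) x hx rfl
      have hinf' : a (n + 1) ++ b (n + 1) <:+: w := by
        rw [ha', ← hb']
        exact ((a n).prefix_append (b n)).isInfix.trans hinf
      have hch : ((b n) ++ b (n + 1)).Chain' (fun x y => y ≠ Letter.inv x) :=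
        hchain.infix (ha' ▸ hinf')
      have hmid := (List.isChain_append.mp hch).2.2
      have hbl : (b (n + 1)).getLast? = (a n).getLast? := by
        rw [hb', List.getLast?_append_of_ne_nil _ hbne]
      have hbh : (b n).head? = (a n).head? := by
        rw [hb', List.head?_append_of_ne_nil _ hbn]
      refine ⟨ha' ▸ hbn, hbne, hinf', ?_, ?_, ?_, ?_⟩
      · rw [ha']; intro x hx y hy h; exact hmid x hx y hy (h ▸ rfl)
      · rw [ha', hbl, hbh]; exact h3
      · rw [ha', hbh]; exact h2
      · rw [ha', hbl]; intro x hx y hy; exact (h4 y hy x hx).symm
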